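/- arXiv:2305.03203 — 5 statements merged into one kernel-verified Lean document; each statement's English description precedes it below -/
import Mathlib

section
/- Let X_1,...,X_n be i.i.d. random variables supported on [0,1], and for 1 ≤ s ≤ n-1 let Y_s and Y_{s+1} denote the s-th and (s+1)-th order statistics (in increasing order). Then E[Y_{s+1} - Y_s] ≤ C(n,s) · (s/n)^s · (1 - s/n)^{n-s}. -/
open MeasureTheory ProbabilityTheory
open scoped ENNReal

/-- The `s`-th order statistic (s-th smallest, 1-indexed) of the values `v`. -/
noncomputable def orderStat {n : ℕ} (v : Fin n → ℝ) (s : ℕ) : ℝ :=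
  (List.insertionSort (· ≤ ·) (List.ofFn v)).getD (s - 1) 0

/-- For a sorted list, the `i`-th entry is `≤ t` iff at least `i+1` entries are `≤ t`. -/
theorem sorted_getD_le_iff : ∀ (l : List ℝ), l.Pairwise (· ≤ ·) → ∀ (i : ℕ) (t : ℝ),
    i < l.length → (l.getD i 0 ≤ t ↔ i < l.countP (fun x => decide (x ≤ t)))
  | [], _, i, t, h => by simp at h
  | a :: l, hs, i, t, h => by
    rw [List.pairwise_cons] at hs
    obtain ⟨ha, hl⟩ := hs
    by_cases hat : a ≤ t
    · cases i with
      | zero =>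
        simp [List.countP_cons, hat]
      | succ i =>
        have := sorted_getD_le_iff l hl i t (by simpa using h)
        have hg : (a :: l).getD (i+1) 0 = l.getD i 0 := rfl
        rw [hg, this, List.countP_cons]
        simp [hat]
    · have hcl : l.countP (fun x => decide (x ≤ t)) = 0 := by
        rw [List.countP_eq_zero]
        intro x hx
        simpa using lt_of_lt_of_le (lt_of_not_ge hat) (ha x hx)
      cases i with
      | zero => simp [List.countP_cons, hat, hcl]
      | succ i =>
        have hi : i < l.length := by simpa using h
        have : a ≤ l.getD i 0 := by
          rw [List.getD_eq_getElem l 0 hi]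
          exact ha _ (l.getElem_mem hi)
        constructor
        · intro hle; exact absurd (le_trans this hle) hat
        · intro hlt; simp [List.countP_cons, hat, hcl] at hlt

/-- The number of values `≤ t`. -/
noncomputable def numLE {n : ℕ} (v : Fin n → ℝ) (t : ℝ) : ℕ := (Finset.univ.filter fun i => v i ≤ t).card

theorem countP_ofFn {n : ℕ} (v : Fin n → ℝ) (t : ℝ) :
    (List.ofFn v).countP (fun x => decide (x ≤ t)) = numLE v t := by
  induction n with
  | zero => simp [numLE]
  | succ m ih =>
    rw [List.ofFn_succ, List.countP_cons, ih (fun i => v i.succ)]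
    simp only [numLE, Fin.card_filter_univ_succ]
    by_cases h : v 0 ≤ t <;> simp [h] <;> omega

theorem orderStat_le_iff {n : ℕ} (v : Fin n → ℝ) (k : ℕ) (hk1 : 1 ≤ k) (hkn : k ≤ n) (t : ℝ) :
    orderStat v k ≤ t ↔ k ≤ numLE v t := by
  have hlen : (List.insertionSort (· ≤ ·) (List.ofFn v)).length = n := by
    rw [List.length_insertionSort, List.length_ofFn]
  have := sorted_getD_le_iff (List.insertionSort (· ≤ ·) (List.ofFn v))
    (List.pairwise_insertionSort _ _) (k - 1) t (by omega)
  rw [orderStat, this, (List.perm_insertionSort (· ≤ ·) (List.ofFn v)).countP_eq, countP_ofFn]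
  omega

theorem orderStat_mono {n : ℕ} (v : Fin n → ℝ) (k : ℕ) (hk1 : 1 ≤ k) (hkn : k + 1 ≤ n) :
    orderStat v k ≤ orderStat v (k + 1) := by
  set l := List.insertionSort (· ≤ ·) (List.ofFn v) with hl
  have hlen : l.length = n := by rw [hl, List.length_insertionSort, List.length_ofFn]
  have h1 : k - 1 < l.length := by omega
  have h2 : k < l.length := by omega
  rw [orderStat, orderStat, ← hl, Nat.add_sub_cancel, List.getD_eq_getElem l 0 h1,
    List.getD_eq_getElem l 0 h2]
  exact List.pairwise_iff_getElem.mp (List.pairwise_insertionSort _ _) _ _ h1 h2 (by omega)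

theorem orderStat_mem_Icc {n : ℕ} (v : Fin n → ℝ) (k : ℕ) (hk1 : 1 ≤ k) (hkn : k ≤ n)
    (hv : ∀ i, v i ∈ Set.Icc (0:ℝ) 1) : orderStat v k ∈ Set.Icc (0:ℝ) 1 := by
  set l := List.insertionSort (· ≤ ·) (List.ofFn v) with hl
  have hlen : l.length = n := by rw [hl, List.length_insertionSort, List.length_ofFn]
  have h1 : k - 1 < l.length := by omega
  have hmem : orderStat v k ∈ l := by
    rw [orderStat, ← hl, List.getD_eq_getElem l 0 h1]
    exact l.getElem_mem h1
  rw [hl, List.mem_insertionSort, List.mem_ofFn] at hmem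
  obtain ⟨i, hi⟩ := hmem
  exact hi ▸ hv i

theorem numLE_eq_iff {n : ℕ} (v : Fin n → ℝ) (s : ℕ) (hs1 : 1 ≤ s) (hsn : s + 1 ≤ n) (t : ℝ) :
    numLE v t = s ↔ t ∈ Set.Ico (orderStat v s) (orderStat v (s + 1)) := by
  rw [Set.mem_Ico, orderStat_le_iff v s hs1 (by omega) t, ← not_le,
    orderStat_le_iff v (s+1) (by omega) hsn t]
  omega

theorem meas_numLE_eq {Ω : Type*} [MeasurableSpace Ω] (P : Measure Ω) [IsProbabilityMeasure P]
    (n s : ℕ) (hsn : s ≤ n) (X : Fin n → Ω → ℝ) (hmeas : ∀ i, Measurable (X i))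
    (hindep : iIndepFun X P)
    (μ : Measure ℝ) [IsProbabilityMeasure μ] (hident : ∀ i, Measure.map (X i) P = μ) (t : ℝ) :
    P {ω | numLE (fun i => X i ω) t = s}
      = (n.choose s) * (μ (Set.Iic t)) ^ s * (1 - μ (Set.Iic t)) ^ (n - s) := by
  set p : ℝ≥0∞ := μ (Set.Iic t) with hp
  have hIic : ∀ i, P (X i ⁻¹' Set.Iic t) = p := fun i => by
    rw [hp, ← hident i, Measure.map_apply (hmeas i) measurableSet_Iic]
  have hIoi : ∀ i, P (X i ⁻¹' Set.Ioi t) = 1 - p := fun i => by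
    rw [← Set.compl_Iic, Set.preimage_compl,
      measure_compl (hmeas i measurableSet_Iic) (measure_ne_top _ _), hIic i,
      measure_univ]
  -- the event as a disjoint union over subsets of size s
  have hset : {ω | numLE (fun i => X i ω) t = s}
      = ⋃ A ∈ Finset.univ.powersetCard s, ⋂ i,
          X i ⁻¹' (if i ∈ A then Set.Iic t else Set.Ioi t) := by
    ext ω
    simp only [Set.mem_setOf_eq, Set.mem_iUnion, Set.mem_iInter, Finset.mem_powersetCard,
      Set.mem_preimage]
    constructor
    · intro h
      refine ⟨Finset.univ.filter (fun i => X i ω ≤ t), ⟨Finset.filter_subset _ _, h⟩, fun i => ?_⟩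
      by_cases hi : X i ω ≤ t
      · simp [hi]
      · simp [hi]; exact lt_of_not_ge hi
    · rintro ⟨A, ⟨-, hA⟩, h⟩
      rw [← hA, numLE]
      congr 1
      ext i
      have := h i
      by_cases hi : i ∈ A <;> simp [hi] at this ⊢
      · exact this
      · exact this
  rw [hset, measure_biUnion_finset]
  · have hterm : ∀ A ∈ Finset.univ.powersetCard s,
        P (⋂ i, X i ⁻¹' (if i ∈ A then Set.Iic t else Set.Ioi t)) = p ^ s * (1 - p) ^ (n - s) := by
      intro A hA
      rw [Finset.mem_powersetCard] at hA
      rw [hindep.meas_iInter (fun i => ?_)]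
      · have : ∀ i, P (X i ⁻¹' (if i ∈ A then Set.Iic t else Set.Ioi t))
            = if i ∈ A then p else (1 - p) := by
          intro i; by_cases hi : i ∈ A <;> simp [hi, hIic, hIoi]
        simp_rw [this]
        rw [Finset.prod_ite, Finset.prod_const, Finset.prod_const, Finset.filter_univ_mem, hA.2]
        congr 1
        have hc : (Finset.filter (fun x => ¬ x ∈ A) Finset.univ) = Aᶜ := by
          ext x; simp
        rw [hc, Finset.card_compl, Fintype.card_fin, hA.2]
      · exact ⟨if i ∈ A then Set.Iic t else Set.Ioi t,
          by split <;> [exact measurableSet_Iic; exact measurableSet_Ioi], rfl⟩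
    rw [Finset.sum_congr rfl hterm, Finset.sum_const, Finset.card_powersetCard,
      Finset.card_univ, Fintype.card_fin, nsmul_eq_mul, mul_assoc]
  · intro A hA B hB hAB
    rw [Finset.mem_coe, Finset.mem_powersetCard] at hA hB
    obtain ⟨i, hi⟩ : ∃ i, (i ∈ A ∧ i ∉ B) ∨ (i ∈ B ∧ i ∉ A) := by
      by_contra hc
      push_neg at hc
      exact hAB (Finset.ext fun i => by have := hc i; tauto)
    refine Set.disjoint_left.mpr fun ω hωA hωB => ?_
    have h1 := Set.mem_iInter.mp hωA i
    have h2 := Set.mem_iInter.mp hωB i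
    rcases hi with ⟨h3, h4⟩ | ⟨h3, h4⟩ <;> simp [h3, h4] at h1 h2 <;>
      first
        | exact absurd h1 (not_le.mpr h2)
        | exact absurd h2 (not_le.mpr h1)
  · intro A hA
    exact MeasurableSet.iInter fun i => (hmeas i)
      (by split <;> [exact measurableSet_Iic; exact measurableSet_Ioi])

theorem pow_mul_pow_le_max {n s : ℕ} (hs1 : 1 ≤ s) (hsn : s + 1 ≤ n) (x : ℝ)
    (hx0 : 0 ≤ x) (hx1 : x ≤ 1) :
    x ^ s * (1 - x) ^ (n - s) ≤ ((s:ℝ)/n)^s * (1 - (s:ℝ)/n)^(n-s) := by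
  have hn : (0:ℝ) < n := by
    have : 0 < n := by omega
    exact_mod_cast this
  have hs : (0:ℝ) < s := by exact_mod_cast hs1
  have hns : (0:ℝ) < (n:ℝ) - s := by
    have : (s:ℝ) + 1 ≤ n := by exact_mod_cast hsn
    linarith
  have hcast : ((n - s : ℕ) : ℝ) = (n:ℝ) - s := by
    rw [Nat.cast_sub (by omega)]
  set w₁ : ℝ := s / n with hw₁
  set w₂ : ℝ := ((n:ℝ) - s) / n with hw₂
  have hw1pos : 0 < w₁ := div_pos hs hn
  have hw2pos : 0 < w₂ := div_pos hns hn
  have hwsum : w₁ + w₂ = 1 := by rw [hw₁, hw₂]; field_simp; ring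
  set a : ℝ := x / w₁ with ha
  set b : ℝ := (1 - x) / w₂ with hb
  have ha0 : 0 ≤ a := div_nonneg hx0 hw1pos.le
  have hb0 : 0 ≤ b := div_nonneg (by linarith) hw2pos.le
  have hgm : a ^ w₁ * b ^ w₂ ≤ 1 := by
    calc a ^ w₁ * b ^ w₂ ≤ w₁ * a + w₂ * b :=
          Real.geom_mean_le_arith_mean2_weighted hw1pos.le hw2pos.le ha0 hb0 hwsum
      _ = 1 := by
          rw [ha, hb]
          field_simp
          ring
  have key : a ^ (s:ℝ) * b ^ ((n:ℝ) - s) ≤ 1 := by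
    have h1 : a ^ (s:ℝ) * b ^ ((n:ℝ) - s) = (a ^ w₁ * b ^ w₂) ^ (n:ℝ) := by
      rw [Real.mul_rpow (Real.rpow_nonneg ha0 _) (Real.rpow_nonneg hb0 _),
        ← Real.rpow_mul ha0, ← Real.rpow_mul hb0]
      congr 1 <;> congr 1 <;> simp only [hw₁, hw₂] <;> field_simp
    rw [h1]
    calc (a ^ w₁ * b ^ w₂) ^ (n:ℝ) ≤ 1 ^ (n:ℝ) :=
          Real.rpow_le_rpow (by positivity) hgm (by positivity)
      _ = 1 := Real.one_rpow _
  have hnat : a ^ s * b ^ (n - s) ≤ 1 := by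
    rw [← Real.rpow_natCast a s, ← Real.rpow_natCast b (n - s), hcast]
    exact key
  have hx' : x = w₁ * a := by
    rw [ha, mul_comm]
    field_simp
  have h1x : 1 - x = w₂ * b := by
    rw [hb, mul_comm]
    field_simp
  have h1w : 1 - w₁ = w₂ := by linarith
  calc x ^ s * (1 - x) ^ (n - s) = (w₁*a)^s * (w₂*b)^(n-s) := by rw [← hx', ← h1x]
    _ = (a^s * b^(n-s)) * (w₁^s * w₂^(n-s)) := by rw [mul_pow, mul_pow]; ring
    _ ≤ 1 * (w₁^s * w₂^(n-s)) := mul_le_mul_of_nonneg_right hnat (by positivity)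
    _ = w₁^s * (1-w₁)^(n-s) := by rw [one_mul, h1w]

theorem measurable_numLE_prod {Ω : Type*} [MeasurableSpace Ω] {n : ℕ} (X : Fin n → Ω → ℝ)
    (hmeas : ∀ i, Measurable (X i)) :
    Measurable fun q : Ω × ℝ => numLE (fun i => X i q.1) q.2 := by
  have h : (fun q : Ω × ℝ => numLE (fun i => X i q.1) q.2)
      = fun q => ∑ i, if X i q.1 ≤ q.2 then 1 else 0 := by
    funext q; rw [numLE, Finset.card_filter]
  rw [h]
  exact Finset.measurable_sum _ fun i _ => Measurable.ite
    (measurableSet_le ((hmeas i).comp measurable_fst) measurable_snd)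
    measurable_const measurable_const


/-- If `X_1, …, X_n` are i.i.d. random variables supported on `[0,1]` and `1 ≤ s ≤ n-1`,
then the expected gap between the `(s+1)`-th and `s`-th order statistics is at most
`C(n,s) (s/n)^s (1-s/n)^{n-s}`. -/
theorem stmt0 {Ω : Type*} [MeasurableSpace Ω] (P : Measure Ω) [IsProbabilityMeasure P]
    (n s : ℕ) (hs1 : 1 ≤ s) (hsn : s ≤ n - 1)
    (X : Fin n → Ω → ℝ) (hmeas : ∀ i, Measurable (X i))
    (hindep : iIndepFun X P)
    (μ : Measure ℝ) (hident : ∀ i, Measure.map (X i) P = μ)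
    (hrange : ∀ i ω, X i ω ∈ Set.Icc (0 : ℝ) 1) :
    ∫ ω, (orderStat (fun i => X i ω) (s + 1) - orderStat (fun i => X i ω) s) ∂P
      ≤ (n.choose s : ℝ) * ((s : ℝ) / n) ^ s * (1 - (s : ℝ) / n) ^ (n - s) := by
  have hn1 : 1 ≤ n := by omega
  have hsn' : s + 1 ≤ n := by omega
  haveI : IsProbabilityMeasure μ := by
    rw [← hident ⟨0, by omega⟩]
    exact Measure.isProbabilityMeasure_map (hmeas _).aemeasurable
  set M : ℝ := (n.choose s : ℝ) * ((s : ℝ) / n) ^ s * (1 - (s : ℝ) / n) ^ (n - s) with hM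
  have hsn_le_one : (s:ℝ)/n ≤ 1 := by
    rw [div_le_one (by positivity)]
    exact_mod_cast by omega
  have hM0 : 0 ≤ M := by
    apply mul_nonneg (mul_nonneg (by positivity) (by positivity))
    apply pow_nonneg; linarith
  set g : Ω → ℝ := fun ω =>
    orderStat (fun i => X i ω) (s + 1) - orderStat (fun i => X i ω) s with hg
  have hg0 : ∀ ω, 0 ≤ g ω := fun ω =>
    sub_nonneg.mpr (orderStat_mono _ s hs1 hsn')
  set E : Set (Ω × ℝ) := {q | numLE (fun i => X i q.1) q.2 = s} with hE
  have hEmeas : MeasurableSet E :=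
    (measurable_numLE_prod X hmeas) (measurableSet_singleton s)
  -- slices of E in t are Ico intervals
  have hslice : ∀ ω, {t : ℝ | (ω, t) ∈ E}
      = Set.Ico (orderStat (fun i => X i ω) s) (orderStat (fun i => X i ω) (s+1)) := by
    intro ω
    ext t
    exact numLE_eq_iff (fun i => X i ω) s hs1 hsn' t
  set G : Ω → ℝ≥0∞ := fun ω => ∫⁻ t, E.indicator (fun _ => (1:ℝ≥0∞)) (ω, t) with hG
  have hGg : ∀ ω, G ω = ENNReal.ofReal (g ω) := by
    intro ω
    have h1 : ∀ t, E.indicator (fun _ => (1:ℝ≥0∞)) (ω, t)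
        = (Set.Ico (orderStat (fun i => X i ω) s)
            (orderStat (fun i => X i ω) (s+1))).indicator (fun _ => (1:ℝ≥0∞)) t := by
      intro t
      have hm : (ω, t) ∈ E ↔ t ∈ Set.Ico (orderStat (fun i => X i ω) s)
          (orderStat (fun i => X i ω) (s+1)) := by
        rw [← hslice ω]; rfl
      by_cases h : (ω, t) ∈ E
      · rw [Set.indicator_of_mem h, Set.indicator_of_mem (hm.mp h)]
      · rw [Set.indicator_of_notMem h, Set.indicator_of_notMem (fun hc => h (hm.mpr hc))]
    rw [hG]
    show (∫⁻ t, E.indicator (fun _ => (1:ℝ≥0∞)) (ω, t)) = _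
    rw [lintegral_congr h1, lintegral_indicator measurableSet_Ico _]
    simp [Real.volume_Ico]
    rfl
  have hGmeas : Measurable G :=
    Measurable.lintegral_prod_right ((measurable_one.indicator hEmeas))
  have hgmeas : Measurable g := by
    have : g = fun ω => (G ω).toReal := by
      funext ω
      rw [hGg ω, ENNReal.toReal_ofReal (hg0 ω)]
    rw [this]
    exact hGmeas.ennreal_toReal
  -- the expected gap as a double lintegral
  have hint : ∫ ω, g ω ∂P = (∫⁻ ω, G ω ∂P).toReal := by
    rw [integral_eq_lintegral_of_nonneg_ae (Filter.Eventually.of_forall hg0)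
      hgmeas.aestronglyMeasurable]
    congr 1
    exact lintegral_congr fun ω => (hGg ω).symm
  -- swap
  have hswap : ∫⁻ ω, G ω ∂P
      = ∫⁻ t, ∫⁻ ω, E.indicator (fun _ => (1:ℝ≥0∞)) (ω, t) ∂P ∂volume := by
    exact lintegral_lintegral_swap ((measurable_one.indicator hEmeas)).aemeasurable
  -- inner integral = probability
  have hinner : ∀ t : ℝ, ∫⁻ ω, E.indicator (fun _ => (1:ℝ≥0∞)) (ω, t) ∂P
      = P {ω | numLE (fun i => X i ω) t = s} := by
    intro t
    have h1 : ∀ ω, E.indicator (fun _ => (1:ℝ≥0∞)) (ω, t)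
        = Set.indicator {ω | numLE (fun i => X i ω) t = s} (fun _ => (1:ℝ≥0∞)) ω := by
      intro ω
      have hm : (ω, t) ∈ E ↔ ω ∈ {ω | numLE (fun i => X i ω) t = s} := Iff.rfl
      by_cases h : (ω, t) ∈ E
      · rw [Set.indicator_of_mem h, Set.indicator_of_mem (hm.mp h)]
      · rw [Set.indicator_of_notMem h, Set.indicator_of_notMem (fun hc => h (hm.mpr hc))]
    have h2 : MeasurableSet {ω | numLE (fun i => X i ω) t = s} :=
      hEmeas.preimage (measurable_id.prodMk measurable_const)
    rw [lintegral_congr h1, lintegral_indicator h2 _]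
    simp
  -- pointwise bound on the probability
  have hbound : ∀ t : ℝ, P {ω | numLE (fun i => X i ω) t = s}
      ≤ (Set.Ico (0:ℝ) 1).indicator (fun _ => ENNReal.ofReal M) t := by
    intro t
    by_cases ht : t ∈ Set.Ico (0:ℝ) 1
    · rw [Set.indicator_of_mem ht]
      rw [meas_numLE_eq P n s (by omega) X hmeas hindep μ hident t]
      set p : ℝ≥0∞ := μ (Set.Iic t) with hp
      have hp1 : p ≤ 1 := prob_le_one
      have hptop : p ≠ ⊤ := (lt_of_le_of_lt hp1 ENNReal.one_lt_top).ne
      set pr : ℝ := p.toReal with hpr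
      have hpr0 : 0 ≤ pr := ENNReal.toReal_nonneg
      have hpr1 : pr ≤ 1 := by
        rw [hpr, ← ENNReal.toReal_one]
        exact ENNReal.toReal_mono ENNReal.one_ne_top hp1
      have hpofReal : p = ENNReal.ofReal pr := (ENNReal.ofReal_toReal hptop).symm
      have h1p : 1 - p = ENNReal.ofReal (1 - pr) := by
        rw [hpofReal, ← ENNReal.ofReal_one, ← ENNReal.ofReal_sub _ hpr0]
      rw [h1p, hpofReal, ← ENNReal.ofReal_natCast (n.choose s),
        ← ENNReal.ofReal_pow hpr0, ← ENNReal.ofReal_pow (by linarith),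
        ← ENNReal.ofReal_mul (by positivity), ← ENNReal.ofReal_mul (by positivity)]
      apply ENNReal.ofReal_le_ofReal
      rw [hM, mul_assoc, mul_assoc]
      apply mul_le_mul_of_nonneg_left _ (by positivity)
      exact pow_mul_pow_le_max hs1 hsn' pr hpr0 hpr1
    · rw [Set.indicator_of_notMem ht]
      rw [Set.mem_Ico, not_and_or, not_le, not_lt] at ht
      have hempty : {ω | numLE (fun i => X i ω) t = s} = ∅ := by
        ext ω
        simp only [Set.mem_setOf_eq, Set.mem_empty_iff_false, iff_false]
        rcases ht with ht | ht
        · have : numLE (fun i => X i ω) t = 0 := by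
            rw [numLE, Finset.card_eq_zero, Finset.filter_eq_empty_iff]
            intro i _
            have := (hrange i ω).1
            push_neg
            linarith
          omega
        · have : numLE (fun i => X i ω) t = n := by
            rw [numLE]
            have : Finset.univ.filter (fun i => X i ω ≤ t) = Finset.univ := by
              rw [Finset.filter_eq_self]
              intro i _
              have := (hrange i ω).2
              linarith
            rw [this, Finset.card_univ, Fintype.card_fin]
          omega
      rw [hempty]
      simp
  -- put it together
  rw [hint]
  have hle : ∫⁻ ω, G ω ∂P ≤ ENNReal.ofReal M := by
    rw [hswap]
    calc ∫⁻ t, ∫⁻ ω, E.indicator (fun _ => (1:ℝ≥0∞)) (ω, t) ∂P ∂volume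
        ≤ ∫⁻ t, (Set.Ico (0:ℝ) 1).indicator (fun _ => ENNReal.ofReal M) t ∂volume := by
          apply lintegral_mono
          intro t
          exact le_trans (le_of_eq (hinner t)) (hbound t)
      _ = ENNReal.ofReal M * volume (Set.Ico (0:ℝ) 1) := by
          rw [lintegral_indicator measurableSet_Ico _]
          simp [mul_comm]
      _ = ENNReal.ofReal M := by
          simp [Real.volume_Ico]
  calc (∫⁻ ω, G ω ∂P).toReal ≤ (ENNReal.ofReal M).toReal :=
        ENNReal.toReal_mono ENNReal.ofReal_ne_top hle
    _ = M := ENNReal.toReal_ofReal hM0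
end

section
/- Let A and B be i.i.d. real random variables with finite mean μ and finite variance σ². Then E[|A - B|] ≤ sqrt(4σ²/3). -/
open MeasureTheory ProbabilityTheory


lemma measurable_realSign : Measurable Real.sign := by
  have : Real.sign = fun r : ℝ => if r < 0 then (-1:ℝ) else if 0 < r then 1 else 0 := rfl
  rw [this]
  exact Measurable.ite (measurableSet_lt measurable_id measurable_const) measurable_const
    (Measurable.ite (measurableSet_lt measurable_const measurable_id) measurable_const
      measurable_const)

lemma abs_realSign_le (x : ℝ) : |Real.sign x| ≤ 1 := by
  rcases Real.sign_apply_eq x with h | h | h <;> rw [h] <;> norm_num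

lemma mul_realSign (x : ℝ) : x * Real.sign x = |x| := by
  rcases lt_trichotomy x 0 with h | h | h
  · rw [Real.sign_of_neg h, abs_of_neg h]; ring
  · simp [h]
  · rw [Real.sign_of_pos h, abs_of_pos h]; ring

lemma int_of_bdd {α : Type*} [MeasurableSpace α] {m : Measure α} [IsFiniteMeasure m]
    {f : α → ℝ} (hf : Measurable f) {C : ℝ} (h : ∀ x, |f x| ≤ C) : Integrable f m :=
  Integrable.mono' (integrable_const C) hf.aestronglyMeasurable
    (Filter.Eventually.of_forall (fun x => by rw [Real.norm_eq_abs]; exact h x))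

lemma integral_add3 {α : Type*} [MeasurableSpace α] {m : Measure α} {f g k : α → ℝ}
    (hf : Integrable f m) (hg : Integrable g m) (hk : Integrable k m) :
    ∫ x, (f x + g x + k x) ∂m = (∫ x, f x ∂m) + (∫ x, g x ∂m) + ∫ x, k x ∂m := by
  have h1 := integral_add (hf.add hg) hk
  have h2 := integral_add hf hg
  simp only [Pi.add_apply] at h1
  rw [h1, h2]

section
variable (ν : Measure ℝ) [IsProbabilityMeasure ν]

noncomputable def hfun : ℝ → ℝ := fun a => ∫ b, Real.sign (a - b) ∂ν

variable {ν}

lemma meas_hfun : Measurable (hfun ν) := by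
  have : StronglyMeasurable (Function.uncurry (fun a b : ℝ => Real.sign (a - b))) :=
    (measurable_realSign.comp (measurable_fst.sub measurable_snd)).stronglyMeasurable
  exact this.integral_prod_right.measurable

lemma abs_hfun_le (a : ℝ) : |hfun ν a| ≤ 1 := by
  have := norm_integral_le_of_norm_le_const (μ := ν)
    (f := fun b => Real.sign (a - b)) (C := 1)
    (Filter.Eventually.of_forall (fun b => by rw [Real.norm_eq_abs]; exact abs_realSign_le _))
  simpa [hfun] using this

lemma hfun_sq_le : ∫ a, (hfun ν a)^2 ∂ν ≤ 1/3 := by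
  set h := hfun ν with hh
  have msab : ∀ c : ℝ, Measurable (fun p : ℝ × ℝ => Real.sign (p.1 - p.2) * Real.sign (p.1 - c)) :=
    fun c => (measurable_realSign.comp (measurable_fst.sub measurable_snd)).mul
      (measurable_realSign.comp (measurable_fst.sub measurable_const))
  -- φ a = ∫ x, sign (x - a) * h x
  set φ : ℝ → ℝ := fun a => ∫ x, Real.sign (x - a) * h x ∂ν with hφ
  have meas_sh : Measurable (Function.uncurry (fun a x : ℝ => Real.sign (x - a) * h x)) :=
    (measurable_realSign.comp (measurable_snd.sub measurable_fst)).mul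
      (meas_hfun.comp measurable_snd)
  have meas_φ : Measurable φ := meas_sh.stronglyMeasurable.integral_prod_right.measurable
  have abs_sh : ∀ a x : ℝ, |Real.sign (x - a) * h x| ≤ 1 := by
    intro a x
    rw [abs_mul]
    exact mul_le_one₀ (abs_realSign_le _) (abs_nonneg _) (abs_hfun_le _)
  have abs_φ : ∀ a, |φ a| ≤ 1 := by
    intro a
    have := norm_integral_le_of_norm_le_const (μ := ν)
      (f := fun x => Real.sign (x - a) * h x) (C := 1)
      (Filter.Eventually.of_forall (fun x => by rw [Real.norm_eq_abs]; exact abs_sh a x))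
    simpa using this
  -- inner double integral identities for fixed a
  have e1 : ∀ a : ℝ, (∫ b, ∫ c, Real.sign (a-b) * Real.sign (a-c) ∂ν ∂ν) = h a ^ 2 := by
    intro a
    have : ∀ b : ℝ, (∫ c, Real.sign (a-b) * Real.sign (a-c) ∂ν) = Real.sign (a-b) * h a :=
      fun b => integral_const_mul _ _
    rw [show (fun b => ∫ c, Real.sign (a-b) * Real.sign (a-c) ∂ν)
        = fun b => Real.sign (a-b) * h a from funext this]
    rw [integral_mul_const]
    have : (∫ x, Real.sign (a - x) ∂ν) = h a := rfl
    rw [this]; ring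
  have e2 : ∀ a : ℝ, (∫ b, ∫ c, Real.sign (b-a) * Real.sign (b-c) ∂ν ∂ν) = φ a := by
    intro a
    congr 1
    funext b
    exact integral_const_mul _ _
  have e3 : ∀ a : ℝ, (∫ b, ∫ c, Real.sign (c-a) * Real.sign (c-b) ∂ν ∂ν) = φ a := by
    intro a
    have hsw : (∫ b, ∫ c, Real.sign (c-a) * Real.sign (c-b) ∂ν ∂ν)
        = ∫ c, ∫ b, Real.sign (c-a) * Real.sign (c-b) ∂ν ∂ν := by
      apply integral_integral_swap
      exact int_of_bdd ((measurable_realSign.comp (measurable_snd.sub measurable_const)).mul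
        (measurable_realSign.comp (measurable_snd.sub measurable_fst)))
        (fun p => by
          simp only [Function.uncurry]
          rw [abs_mul]
          exact mul_le_one₀ (abs_realSign_le _) (abs_nonneg _) (abs_realSign_le _))
    rw [hsw]
    congr 1
    funext c
    rw [integral_const_mul]
    rfl
  -- φ = ∫ h^2 after swap
  have eφ : ∫ a, φ a ∂ν = ∫ a, h a ^ 2 ∂ν := by
    have hsw : ∫ a, φ a ∂ν = ∫ x, ∫ a, Real.sign (x - a) * h x ∂ν ∂ν :=
      integral_integral_swap (int_of_bdd meas_sh (fun p => by simpa [Function.uncurry] using abs_sh p.1 p.2))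
    rw [hsw]
    congr 1
    funext x
    rw [integral_mul_const, hh]
    show hfun ν x * hfun ν x = _
    ring
  -- pointwise sum bound
  have signsum : ∀ a b c : ℝ,
      Real.sign (a-b) * Real.sign (a-c) + Real.sign (b-a) * Real.sign (b-c)
        + Real.sign (c-a) * Real.sign (c-b) ≤ 1 := by
    intro a b c
    have s : ∀ x y : ℝ, x < y → Real.sign (x - y) = -1 := fun x y h =>
      Real.sign_of_neg (by linarith)
    have s' : ∀ x y : ℝ, y < x → Real.sign (x - y) = 1 := fun x y h =>
      Real.sign_of_pos (by linarith)
    rcases lt_trichotomy a b with h1 | h1 | h1 <;>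
      rcases lt_trichotomy a c with h2 | h2 | h2 <;>
      rcases lt_trichotomy b c with h3 | h3 | h3 <;>
      simp_all [s, s'] <;> norm_num
  -- abbreviation for the pointwise sum
  set S : ℝ → ℝ → ℝ → ℝ := fun a b c =>
    Real.sign (a-b) * Real.sign (a-c) + Real.sign (b-a) * Real.sign (b-c)
      + Real.sign (c-a) * Real.sign (c-b) with hS
  have absS : ∀ a b c, |S a b c| ≤ 3 := by
    intro a b c
    have h1 : |Real.sign (a-b) * Real.sign (a-c)| ≤ 1 := by
      rw [abs_mul]; exact mul_le_one₀ (abs_realSign_le _) (abs_nonneg _) (abs_realSign_le _)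
    have h2 : |Real.sign (b-a) * Real.sign (b-c)| ≤ 1 := by
      rw [abs_mul]; exact mul_le_one₀ (abs_realSign_le _) (abs_nonneg _) (abs_realSign_le _)
    have h3 : |Real.sign (c-a) * Real.sign (c-b)| ≤ 1 := by
      rw [abs_mul]; exact mul_le_one₀ (abs_realSign_le _) (abs_nonneg _) (abs_realSign_le _)
    calc |S a b c| ≤ |Real.sign (a-b) * Real.sign (a-c) + Real.sign (b-a) * Real.sign (b-c)|
          + |Real.sign (c-a) * Real.sign (c-b)| := abs_add_le _ _
      _ ≤ (|Real.sign (a-b) * Real.sign (a-c)| + |Real.sign (b-a) * Real.sign (b-c)|)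
          + |Real.sign (c-a) * Real.sign (c-b)| := by gcongr; exact abs_add_le _ _
      _ ≤ 3 := by linarith
  have measS : ∀ a b, Measurable (fun c => S a b c) := by
    intro a b
    apply Measurable.add
    apply Measurable.add
    · exact measurable_const.mul (measurable_realSign.comp (measurable_const.sub measurable_id))
    · exact measurable_const.mul (measurable_realSign.comp (measurable_const.sub measurable_id))
    · exact (measurable_realSign.comp (measurable_id.sub measurable_const)).mul
        (measurable_realSign.comp (measurable_id.sub measurable_const))
  -- inner integral of S bounded by 1
  have innerS : ∀ a b, (∫ c, S a b c ∂ν) ≤ 1 := by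
    intro a b
    calc (∫ c, S a b c ∂ν) ≤ ∫ _c, (1:ℝ) ∂ν :=
        integral_mono (int_of_bdd (measS a b) (absS a b)) (integrable_const 1)
          (fun c => signsum a b c)
      _ = 1 := by simp
  -- split the c-integral
  have splitc : ∀ a b : ℝ, (∫ c, S a b c ∂ν)
      = Real.sign (a-b) * h a + Real.sign (b-a) * h b
        + ∫ c, Real.sign (c-a) * Real.sign (c-b) ∂ν := by
    intro a b
    have i1 : Integrable (fun c => Real.sign (a-b) * Real.sign (a-c)) ν :=
      int_of_bdd (measurable_const.mul
        (measurable_realSign.comp (measurable_const.sub measurable_id)))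
        (fun c => by
          rw [abs_mul]
          exact mul_le_one₀ (abs_realSign_le _) (abs_nonneg _) (abs_realSign_le _))
    have i2 : Integrable (fun c => Real.sign (b-a) * Real.sign (b-c)) ν :=
      int_of_bdd (measurable_const.mul
        (measurable_realSign.comp (measurable_const.sub measurable_id)))
        (fun c => by
          rw [abs_mul]
          exact mul_le_one₀ (abs_realSign_le _) (abs_nonneg _) (abs_realSign_le _))
    have i3 : Integrable (fun c => Real.sign (c-a) * Real.sign (c-b)) ν :=
      int_of_bdd ((measurable_realSign.comp (measurable_id.sub measurable_const)).mul
        (measurable_realSign.comp (measurable_id.sub measurable_const)))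
        (fun c => by
          rw [abs_mul]
          exact mul_le_one₀ (abs_realSign_le _) (abs_nonneg _) (abs_realSign_le _))
    rw [hS]
    rw [integral_add3 i1 i2 i3, integral_const_mul, integral_const_mul]
    rfl
  -- k a b := third inner integral, measurable in b and bounded
  have meask : ∀ a, Measurable (fun b => ∫ c, Real.sign (c-a) * Real.sign (c-b) ∂ν) := by
    intro a
    exact (((measurable_realSign.comp (measurable_snd.sub measurable_const)).mul
      (measurable_realSign.comp
        (measurable_snd.sub measurable_fst))).stronglyMeasurable.integral_prod_right').measurable
  have absk : ∀ a b, |∫ c, Real.sign (c-a) * Real.sign (c-b) ∂ν| ≤ 1 := by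
    intro a b
    have := norm_integral_le_of_norm_le_const (μ := ν)
      (f := fun c => Real.sign (c-a) * Real.sign (c-b)) (C := 1)
      (Filter.Eventually.of_forall (fun c => by
        rw [Real.norm_eq_abs, abs_mul]
        exact mul_le_one₀ (abs_realSign_le _) (abs_nonneg _) (abs_realSign_le _)))
    simpa using this
  -- split the b-integral, for fixed a
  have splitb : ∀ a : ℝ, (∫ b, ∫ c, S a b c ∂ν ∂ν) = h a ^ 2 + φ a + φ a := by
    intro a
    have j1 : Integrable (fun b => Real.sign (a-b) * h a) ν :=
      int_of_bdd ((measurable_realSign.comp (measurable_const.sub measurable_id)).mul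
        measurable_const)
        (fun b => by
          rw [abs_mul]
          exact mul_le_one₀ (abs_realSign_le _) (abs_nonneg _) (abs_hfun_le _))
    have j2 : Integrable (fun b => Real.sign (b-a) * h b) ν :=
      int_of_bdd ((measurable_realSign.comp (measurable_id.sub measurable_const)).mul
        meas_hfun) (fun b => abs_sh a b)
    have j3 : Integrable (fun b => ∫ c, Real.sign (c-a) * Real.sign (c-b) ∂ν) ν :=
      int_of_bdd (meask a) (absk a)
    have : (fun b => ∫ c, S a b c ∂ν) = fun b => Real.sign (a-b) * h a + Real.sign (b-a) * h b
        + ∫ c, Real.sign (c-a) * Real.sign (c-b) ∂ν := funext (splitc a)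
    rw [this, integral_add3 j1 j2 j3, integral_mul_const]
    have hha : (∫ x, Real.sign (a - x) ∂ν) = h a := rfl
    have hphi : (∫ b, Real.sign (b-a) * h b ∂ν) = φ a := rfl
    have hphi2 : (∫ b, ∫ c, Real.sign (c-a) * Real.sign (c-b) ∂ν ∂ν) = φ a := e3 a
    rw [hha, hphi, hphi2]
    ring
  -- bound: for each a, h a^2 + 2 φ a ≤ 1
  have boundG : ∀ a : ℝ, h a ^ 2 + φ a + φ a ≤ 1 := by
    intro a
    rw [← splitb a]
    have intF : Integrable (fun b => ∫ c, S a b c ∂ν) ν := by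
      have : (fun b => ∫ c, S a b c ∂ν) = fun b => Real.sign (a-b) * h a
          + Real.sign (b-a) * h b + ∫ c, Real.sign (c-a) * Real.sign (c-b) ∂ν :=
        funext (splitc a)
      rw [this]
      refine Integrable.add (Integrable.add ?_ ?_) (int_of_bdd (meask a) (absk a))
      · exact int_of_bdd ((measurable_realSign.comp (measurable_const.sub measurable_id)).mul
          measurable_const)
          (fun b => by
            rw [abs_mul]
            exact mul_le_one₀ (abs_realSign_le _) (abs_nonneg _) (abs_hfun_le _))
      · exact int_of_bdd ((measurable_realSign.comp (measurable_id.sub measurable_const)).mul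
          meas_hfun) (fun b => abs_sh a b)
    calc (∫ b, ∫ c, S a b c ∂ν ∂ν) ≤ ∫ _b, (1:ℝ) ∂ν :=
        integral_mono intF (integrable_const 1) (fun b => innerS a b)
      _ = 1 := by simp
  -- integrate over a
  have inth2 : Integrable (fun a => h a ^ 2) ν := by
    refine int_of_bdd (meas_hfun.pow_const 2) (C := 1) (fun a => ?_)
    rw [abs_pow, pow_two]
    exact mul_le_one₀ (abs_hfun_le _) (abs_nonneg _) (abs_hfun_le _)
  have intφ : Integrable φ ν := int_of_bdd meas_φ abs_φ
  have final : (∫ a, h a ^ 2 ∂ν) + (∫ a, φ a ∂ν) + (∫ a, φ a ∂ν) ≤ 1 := by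
    have hsum : Integrable (fun a => h a ^ 2 + φ a + φ a) ν := (inth2.add intφ).add intφ
    have hmono := integral_mono hsum (integrable_const 1) boundG
    rw [integral_add3 inth2 intφ intφ] at hmono
    simpa using hmono
  rw [eφ] at final
  linarith


lemma integrable_hfun_sq : Integrable (fun a => (hfun ν a) ^ 2) ν := by
  refine int_of_bdd (meas_hfun.pow_const 2) (C := 1) (fun a => ?_)
  rw [abs_pow, pow_two]
  exact mul_le_one₀ (abs_hfun_le _) (abs_nonneg _) (abs_hfun_le _)

lemma key_prod (μ σ2 : ℝ) (hint2 : Integrable (fun x => (x - μ) ^ 2) ν)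
    (hvar : ∫ x, (x - μ) ^ 2 ∂ν = σ2) :
    ∫ p : ℝ × ℝ, |p.1 - p.2| ∂(ν.prod ν) ≤ Real.sqrt (4 * σ2 / 3) := by
  set h := hfun ν with hh
  have habsx : Integrable (fun x => |x - μ|) ν := by
    refine Integrable.mono' ((hint2.add (integrable_const 1)).div_const 2)
      ((measurable_id.sub measurable_const).abs.aestronglyMeasurable)
      (Filter.Eventually.of_forall (fun x => ?_))
    simp only [Pi.add_apply, Real.norm_eq_abs, abs_abs]
    nlinarith [sq_nonneg (|x - μ| - 1), sq_abs (x - μ)]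
  have hfst : Integrable (fun p : ℝ × ℝ => |p.1 - μ|) (ν.prod ν) := by
    have hm : (ν.prod ν).map Prod.fst = ν := by
      rw [Measure.map_fst_prod, measure_univ, one_smul]
    have h2 := habsx
    rw [← hm] at h2
    exact (integrable_map_measure
      ((measurable_id.sub measurable_const).abs.aestronglyMeasurable)
      measurable_fst.aemeasurable).mp h2
  have hsnd : Integrable (fun p : ℝ × ℝ => |p.2 - μ|) (ν.prod ν) := by
    have hm : (ν.prod ν).map Prod.snd = ν := by
      rw [Measure.map_snd_prod, measure_univ, one_smul]
    have h2 := habsx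
    rw [← hm] at h2
    exact (integrable_map_measure
      ((measurable_id.sub measurable_const).abs.aestronglyMeasurable)
      measurable_snd.aemeasurable).mp h2
  have meas_s2 : Measurable (fun p : ℝ × ℝ => Real.sign (p.1 - p.2)) :=
    measurable_realSign.comp (measurable_fst.sub measurable_snd)
  have intf1 : Integrable (fun p : ℝ × ℝ => (p.1 - μ) * Real.sign (p.1 - p.2)) (ν.prod ν) := by
    refine Integrable.mono' hfst
      (((measurable_fst.sub measurable_const).mul meas_s2).aestronglyMeasurable)
      (Filter.Eventually.of_forall (fun p => ?_))
    rw [Real.norm_eq_abs, abs_mul]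
    calc |p.1 - μ| * |Real.sign (p.1 - p.2)| ≤ |p.1 - μ| * 1 :=
        mul_le_mul_of_nonneg_left (abs_realSign_le _) (abs_nonneg _)
      _ = |p.1 - μ| := mul_one _
  have intf2 : Integrable (fun p : ℝ × ℝ => (μ - p.2) * Real.sign (p.1 - p.2)) (ν.prod ν) := by
    refine Integrable.mono' hsnd
      (((measurable_const.sub measurable_snd).mul meas_s2).aestronglyMeasurable)
      (Filter.Eventually.of_forall (fun p => ?_))
    rw [Real.norm_eq_abs, abs_mul]
    calc |μ - p.2| * |Real.sign (p.1 - p.2)| ≤ |μ - p.2| * 1 :=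
        mul_le_mul_of_nonneg_left (abs_realSign_le _) (abs_nonneg _)
      _ = |p.2 - μ| := by rw [mul_one, abs_sub_comm]
  -- split the integral
  have hpt : ∀ p : ℝ × ℝ, |p.1 - p.2|
      = (p.1 - μ) * Real.sign (p.1 - p.2) + (μ - p.2) * Real.sign (p.1 - p.2) := by
    intro p
    rw [← mul_realSign (p.1 - p.2)]
    ring
  have hsplit : ∫ p : ℝ × ℝ, |p.1 - p.2| ∂(ν.prod ν)
      = (∫ p : ℝ × ℝ, (p.1 - μ) * Real.sign (p.1 - p.2) ∂(ν.prod ν))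
        + ∫ p : ℝ × ℝ, (μ - p.2) * Real.sign (p.1 - p.2) ∂(ν.prod ν) := by
    rw [show (fun p : ℝ × ℝ => |p.1 - p.2|) = fun p : ℝ × ℝ =>
      (p.1 - μ) * Real.sign (p.1 - p.2) + (μ - p.2) * Real.sign (p.1 - p.2) from funext hpt]
    exact integral_add intf1 intf2
  -- second piece equals the first by swapping
  have hswap : (∫ p : ℝ × ℝ, (μ - p.2) * Real.sign (p.1 - p.2) ∂(ν.prod ν))
      = ∫ p : ℝ × ℝ, (p.1 - μ) * Real.sign (p.1 - p.2) ∂(ν.prod ν) := by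
    have := integral_prod_swap (μ := ν) (ν := ν)
      (fun p : ℝ × ℝ => (μ - p.2) * Real.sign (p.1 - p.2))
    rw [← this]
    congr 1
    funext z
    show (μ - z.1) * Real.sign (z.2 - z.1) = (z.1 - μ) * Real.sign (z.1 - z.2)
    rw [show z.2 - z.1 = -(z.1 - z.2) by ring, Real.sign_neg]
    ring
  -- first piece as an iterated integral
  have hT1 : (∫ p : ℝ × ℝ, (p.1 - μ) * Real.sign (p.1 - p.2) ∂(ν.prod ν))
      = ∫ x, (x - μ) * h x ∂ν := by
    rw [integral_prod _ intf1]
    congr 1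
    funext a
    show (∫ y, (a - μ) * Real.sign (a - y) ∂ν) = (a - μ) * h a
    rw [integral_const_mul]
    rfl
  set T := ∫ x, (x - μ) * h x ∂ν with hT
  have hmain : ∫ p : ℝ × ℝ, |p.1 - p.2| ∂(ν.prod ν) = 2 * T := by
    rw [hsplit, hswap, hT1]; ring
  -- integrability of (x-μ) * h x
  have intT : Integrable (fun x => (x - μ) * h x) ν := by
    refine Integrable.mono' habsx
      (((measurable_id.sub measurable_const).mul meas_hfun).aestronglyMeasurable)
      (Filter.Eventually.of_forall (fun x => ?_))
    rw [Real.norm_eq_abs, abs_mul]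
    calc |x - μ| * |h x| ≤ |x - μ| * 1 :=
        mul_le_mul_of_nonneg_left (abs_hfun_le _) (abs_nonneg _)
      _ = |x - μ| := mul_one _
  have inth2 : Integrable (fun a => h a ^ 2) ν := integrable_hfun_sq
  have hsq : ∫ a, h a ^ 2 ∂ν ≤ 1 / 3 := hfun_sq_le
  have hσ2 : 0 ≤ σ2 := hvar ▸ integral_nonneg (fun x => sq_nonneg _)
  -- the key family of bounds
  have key2 : ∀ t : ℝ, 0 < t → 2 * T ≤ t * σ2 + 1 / (3 * t) := by
    intro t ht
    have hpt2 : ∀ x : ℝ, 2 * ((x - μ) * h x) ≤ t * (x - μ) ^ 2 + (h x) ^ 2 / t := by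
      intro x
      have hmul : 2 * ((x - μ) * h x) * t ≤ (t * (x - μ) ^ 2 + (h x) ^ 2 / t) * t := by
        have he : (t * (x - μ) ^ 2 + (h x) ^ 2 / t) * t = t ^ 2 * (x - μ) ^ 2 + (h x) ^ 2 := by
          field_simp
        rw [he]
        nlinarith [sq_nonneg (t * (x - μ) - h x)]
      exact le_of_mul_le_mul_right hmul ht
    have int2T : Integrable (fun x => 2 * ((x - μ) * h x)) ν := intT.const_mul 2
    have intR : Integrable (fun x => t * (x - μ) ^ 2 + (h x) ^ 2 / t) ν :=
      (hint2.const_mul t).add (inth2.div_const t)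
    have hm := integral_mono int2T intR hpt2
    have hL : ∫ x, 2 * ((x - μ) * h x) ∂ν = 2 * T := integral_const_mul 2 _
    have hR : ∫ x, (t * (x - μ) ^ 2 + (h x) ^ 2 / t) ∂ν
        = t * σ2 + (∫ a, h a ^ 2 ∂ν) / t := by
      have hadd : ∫ x, (t * (x - μ) ^ 2 + (h x) ^ 2 / t) ∂ν
          = (∫ x, t * (x - μ) ^ 2 ∂ν) + ∫ x, (h x) ^ 2 / t ∂ν :=
        integral_add (hint2.const_mul t) (inth2.div_const t)
      rw [hadd, integral_const_mul, hvar, integral_div]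
    rw [hL, hR] at hm
    have hdiv : (∫ a, h a ^ 2 ∂ν) / t ≤ (1 / 3) / t := div_le_div_of_nonneg_right hsq ht.le
    have : (1 / 3 : ℝ) / t = 1 / (3 * t) := by rw [div_div]
    linarith
  rw [hmain]
  rcases eq_or_lt_of_le hσ2 with hz | hpos
  · -- σ2 = 0
    have h0 : ∀ ε : ℝ, 0 < ε → 2 * T ≤ ε := by
      intro ε hε
      have ht : (0:ℝ) < 1 / (3 * ε) := by positivity
      have hb := key2 _ ht
      rw [← hz] at hb
      have : 1 / (3 * (1 / (3 * ε))) = ε := by field_simp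
      rw [mul_zero, zero_add, this] at hb
      exact hb
    have hT0 : 2 * T ≤ 0 := by
      by_contra hc
      push_neg at hc
      have := h0 T (by linarith)
      linarith
    have : Real.sqrt (4 * σ2 / 3) = 0 := by rw [← hz]; norm_num
    rw [this]
    exact hT0
  · set s := Real.sqrt σ2 with hsdef
    set u := Real.sqrt 3 with hudef
    have hs : s ^ 2 = σ2 := Real.sq_sqrt hσ2
    have hs0 : 0 < s := Real.sqrt_pos.mpr hpos
    have hu : u ^ 2 = 3 := Real.sq_sqrt (by norm_num)
    have hu0 : 0 < u := Real.sqrt_pos.mpr (by norm_num)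
    have ht : (0:ℝ) < 1 / (u * s) := by positivity
    have hb := key2 _ ht
    have heq : 1 / (u * s) * σ2 + 1 / (3 * (1 / (u * s))) = 2 * s / u := by
      rw [← hs, ← hu]
      field_simp
      ring
    have hr : Real.sqrt (4 * σ2 / 3) = 2 * s / u := by
      have h4 : (2 * s / u) ^ 2 = 4 * σ2 / 3 := by
        rw [div_pow, mul_pow, hs, hu]
        norm_num
      rw [← h4, Real.sqrt_sq (by positivity)]
    rw [hr]
    rw [heq] at hb
    exact hb

end


/-- If `A` and `B` are i.i.d. real random variables with mean `μ` and variance `σ²`,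
then `E|A - B| ≤ sqrt(4σ²/3)`. -/
theorem stmt3 {Ω : Type*} [MeasurableSpace Ω] (P : Measure Ω) [IsProbabilityMeasure P]
    (A B : Ω → ℝ) (hA : Measurable A) (hB : Measurable B)
    (hindep : IndepFun A B P)
    (hident : Measure.map A P = Measure.map B P)
    (μ σ2 : ℝ)
    (hintA : Integrable A P) (hintA2 : Integrable (fun ω => (A ω - μ) ^ 2) P)
    (hmean : ∫ ω, A ω ∂P = μ)
    (hvar : ∫ ω, (A ω - μ) ^ 2 ∂P = σ2) :
    ∫ ω, |A ω - B ω| ∂P ≤ Real.sqrt (4 * σ2 / 3) := by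
  set ν := P.map A with hν
  haveI : IsProbabilityMeasure ν := Measure.isProbabilityMeasure_map hA.aemeasurable
  have hmeas2 : AEStronglyMeasurable (fun x : ℝ => (x - μ) ^ 2) ν :=
    ((measurable_id.sub measurable_const).pow_const 2).aestronglyMeasurable
  have hint2 : Integrable (fun x : ℝ => (x - μ) ^ 2) ν :=
    (integrable_map_measure hmeas2 hA.aemeasurable).mpr hintA2
  have hvar' : ∫ x, (x - μ) ^ 2 ∂ν = σ2 := by
    rw [hν, integral_map hA.aemeasurable hmeas2]
    exact hvar
  have hmap : P.map (fun ω => (A ω, B ω)) = ν.prod ν := by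
    have h1 := (indepFun_iff_map_prod_eq_prod_map_map hA.aemeasurable hB.aemeasurable).mp hindep
    rw [h1, ← hident]
  have hint : ∫ p : ℝ × ℝ, |p.1 - p.2| ∂(ν.prod ν) = ∫ ω, |A ω - B ω| ∂P := by
    rw [← hmap, integral_map (f := fun p : ℝ × ℝ => |p.1 - p.2|) (hA.prodMk hB).aemeasurable
      ((measurable_fst.sub measurable_snd).abs.aestronglyMeasurable)]
  rw [← hint]
  exact key_prod μ σ2 hint2 hvar'
end

section
/- Let X_1,...,X_n be i.i.d. random variables with a distribution having a monotone (nondecreasing) hazard rate. Then for every r in [n], the r-th order statistic of X_1,...,X_n also has a monotone nondecreasing hazard rate. -/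
/-- Core termwise inequality for the order-statistic hazard-rate comparison. -/
lemma stmt7_core (a b u v p q : ℝ) (j k m : ℕ)
    (ha : 0 ≤ a) (hab : a ≤ b) (hv : 0 ≤ v) (hvu : v ≤ u)
    (hp : 0 ≤ p) (hq : 0 ≤ q) (hpq : p * v ≤ q * u) :
    p * a ^ (j + k) * u ^ m * (b ^ j * v ^ (m + k + 1)) ≤
      q * b ^ (j + k) * v ^ m * (a ^ j * u ^ (m + k + 1)) := by
  have hb : 0 ≤ b := ha.trans hab
  have hu : 0 ≤ u := hv.trans hvu
  have havbu : a * v ≤ b * u := mul_le_mul hab hvu hv hb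
  calc p * a ^ (j + k) * u ^ m * (b ^ j * v ^ (m + k + 1))
      = (p * v) * (a * b) ^ j * (a * v) ^ k * (u * v) ^ m := by ring
    _ ≤ (q * u) * (a * b) ^ j * (b * u) ^ k * (u * v) ^ m := by
        gcongr <;> positivity
    _ = q * b ^ (j + k) * v ^ m * (a ^ j * u ^ (m + k + 1)) := by ring

/-- If a distribution with density `f` and cdf `F` has monotone nondecreasing hazard rate, then
the `r`-th order statistic of `n` i.i.d. samples from it also has a monotone nondecreasing hazard
rate: `g/(1-G)` is nondecreasing, where `g` is the order-statistic density and `1-G` its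
survival function. -/
theorem stmt7 (n r : ℕ) (hr1 : 1 ≤ r) (hrn : r ≤ n)
    (f F : ℝ → ℝ) (hf0 : ∀ x, 0 ≤ f x)
    (hFmono : Monotone F) (hF0 : ∀ x, 0 ≤ F x) (hF1 : ∀ x, F x ≤ 1)
    (hMHR : MonotoneOn (fun x => f x / (1 - F x)) {x | F x < 1}) :
    MonotoneOn
      (fun x =>
        ((n.factorial : ℝ) / ((r - 1).factorial * (n - r).factorial)
            * f x * F x ^ (r - 1) * (1 - F x) ^ (n - r))
          / (∑ j ∈ Finset.range r, (n.choose j : ℝ) * F x ^ j * (1 - F x) ^ (n - j)))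
      {x | F x < 1} := by
  have hBpos : ∀ z : ℝ, F z < 1 →
      0 < ∑ j ∈ Finset.range r, (n.choose j : ℝ) * F z ^ j * (1 - F z) ^ (n - j) := by
    intro z h1
    apply Finset.sum_pos'
    · intro i _
      exact mul_nonneg (mul_nonneg (by positivity) (pow_nonneg (hF0 z) i))
        (pow_nonneg (by linarith) _)
    · refine ⟨0, Finset.mem_range.mpr hr1, ?_⟩
      simp only [Nat.choose_zero_right, Nat.cast_one, pow_zero, one_mul, Nat.sub_zero, mul_one]
      exact pow_pos (by linarith) n
  intro x hx y hy hxy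
  have hx' : F x < 1 := hx
  have hy' : F y < 1 := hy
  have hux : (0:ℝ) < 1 - F x := by linarith
  have huy : (0:ℝ) < 1 - F y := by linarith
  have hFxy : F x ≤ F y := hFmono hxy
  have hmhr := hMHR hx hy hxy
  simp only at hmhr
  have hfu : f x * (1 - F y) ≤ f y * (1 - F x) := by
    rw [div_le_div_iff₀ hux huy] at hmhr
    linarith [hmhr]
  have hBx := hBpos x hx'
  have hBy := hBpos y hy'
  simp only
  rw [div_le_div_iff₀ hBx hBy, Finset.mul_sum, Finset.mul_sum]
  apply Finset.sum_le_sum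
  intro j hj
  have hjr : j < r := Finset.mem_range.mp hj
  obtain ⟨k, hk1, hk2⟩ : ∃ k, r - 1 = j + k ∧ n - j = (n - r) + k + 1 :=
    ⟨r - 1 - j, by omega, by omega⟩
  rw [hk1, hk2]
  have hC : (0:ℝ) ≤ (n.factorial : ℝ) / ((r - 1).factorial * (n - r).factorial) := by
    positivity
  have key := stmt7_core (F x) (F y) (1 - F x) (1 - F y) (f x) (f y) j k (n - r)
    (hF0 x) hFxy (le_of_lt huy) (by linarith) (hf0 x) (hf0 y) hfu
  calc (n.factorial : ℝ) / ((j + k).factorial * (n - r).factorial) * f x * F x ^ (j + k) *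
        (1 - F x) ^ (n - r) * ((n.choose j : ℝ) * F y ^ j * (1 - F y) ^ ((n - r) + k + 1))
      = ((n.factorial : ℝ) / ((j + k).factorial * (n - r).factorial) * (n.choose j : ℝ)) *
        (f x * F x ^ (j + k) * (1 - F x) ^ (n - r) *
          (F y ^ j * (1 - F y) ^ ((n - r) + k + 1))) := by ring
    _ ≤ ((n.factorial : ℝ) / ((j + k).factorial * (n - r).factorial) * (n.choose j : ℝ)) *
        (f y * F y ^ (j + k) * (1 - F y) ^ (n - r) *
          (F x ^ j * (1 - F x) ^ ((n - r) + k + 1))) := by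
        exact mul_le_mul_of_nonneg_left key (by positivity)
    _ = (n.factorial : ℝ) / ((j + k).factorial * (n - r).factorial) * f y * F y ^ (j + k) *
        (1 - F y) ^ (n - r) * ((n.choose j : ℝ) * F x ^ j * (1 - F x) ^ ((n - r) + k + 1)) := by
        ring
end

section
/- Let g, h : ℝ → ℝ with g integrable, h nonnegative and nonincreasing, and suppose ∫_{-∞}^t g(x) dx ≤ 0 for all t ∈ ℝ. Then ∫_{-∞}^t g(x) h(x) dx ≤ 0 for all t ∈ ℝ. -/
open MeasureTheory

/-- Integral of `g` over the intersection of `Iic t` with a super-level set of an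
antitone function is nonpositive, given all integrals over `Iic u` are nonpositive. -/
lemma key_aux (g h : ℝ → ℝ) (hhanti : Antitone h)
    (hneg : ∀ t : ℝ, ∫ x in Set.Iic t, g x ≤ 0) (t s : ℝ) :
    ∫ x in Set.Iic t ∩ {x | s < h x}, g x ≤ 0 := by
  set B := Set.Iic t ∩ {x | s < h x} with hB
  rcases B.eq_empty_or_nonempty with h0 | hne
  · rw [h0]; simp
  · have hbdd : BddAbove B := ⟨t, fun x hx => hx.1⟩
    set u := sSup B with hu
    have hlow : ∀ ⦃x y : ℝ⦄, y ≤ x → x ∈ B → y ∈ B := by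
      intro x y hyx hx
      exact ⟨le_trans hyx hx.1, lt_of_lt_of_le hx.2 (hhanti hyx)⟩
    have hsub1 : Set.Iio u ⊆ B := by
      intro y hy
      obtain ⟨b, hb, hyb⟩ := exists_lt_of_lt_csSup hne hy
      exact hlow hyb.le hb
    have hsub2 : B ⊆ Set.Iic u := fun x hx => le_csSup hbdd hx
    have hae : B =ᵐ[volume] Set.Iic u := by
      rw [MeasureTheory.ae_eq_set]
      constructor
      · rw [Set.diff_eq_empty.2 hsub2]; simp
      · refine measure_mono_null (fun x hx => ?_) (measure_singleton u)
        rcases (show x ≤ u from hx.1).lt_or_eq with hlt | heq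
        · exact absurd (hsub1 hlt) hx.2
        · exact heq
    calc ∫ x in B, g x = ∫ x in Set.Iic u, g x := setIntegral_congr_set hae
      _ ≤ 0 := hneg u

/-- Barlow–Proschan lemma: if `g` is integrable with `∫_{-∞}^t g ≤ 0` for all `t`, and `h` is
nonnegative and nonincreasing (with `g·h` integrable), then `∫_{-∞}^t g·h ≤ 0` for all `t`. -/
theorem stmt12 (g h : ℝ → ℝ)
    (hg : Integrable g) (hgh : Integrable (fun x => g x * h x))
    (hh0 : ∀ x, 0 ≤ h x) (hhanti : Antitone h)
    (hneg : ∀ t : ℝ, ∫ x in Set.Iic t, g x ≤ 0) :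
    ∀ t : ℝ, ∫ x in Set.Iic t, g x * h x ≤ 0 := by
  intro t
  -- replace g by a measurable representative
  set g' : ℝ → ℝ := hg.1.mk g with hg'def
  have hmeas : Measurable g' := hg.1.stronglyMeasurable_mk.measurable
  have hgg' : g =ᵐ[volume] g' := hg.1.ae_eq_mk
  have hmeash : Measurable h := hhanti.measurable
  have hneg' : ∀ u : ℝ, ∫ x in Set.Iic u, g' x ≤ 0 := by
    intro u
    calc ∫ x in Set.Iic u, g' x = ∫ x in Set.Iic u, g x :=
          integral_congr_ae (ae_restrict_of_ae hgg'.symm)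
      _ ≤ 0 := hneg u
  have hghae : (fun x => g x * h x) =ᵐ[volume] (fun x => g' x * h x) :=
    hgg'.mono fun x hx => by dsimp only; rw [hx]
  have hgh' : Integrable (fun x => g' x * h x) := hgh.congr hghae
  have hmain : ∫ x in Set.Iic t, g x * h x = ∫ x in Set.Iic t, g' x * h x :=
    integral_congr_ae (ae_restrict_of_ae hghae)
  rw [hmain]
  -- layer cake computation
  have hA : ∀ (x c : ℝ), ∫ s, (Set.Ioo (0:ℝ) (h x)).indicator (fun _ => c) s = c * h x := by
    intro x c
    rw [integral_indicator_const c measurableSet_Ioo, Real.volume_real_Ioo_of_le (hh0 x), smul_eq_mul,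
      sub_zero]
    ring
  set F : ℝ × ℝ → ℝ := fun p => (Set.Ioo (0:ℝ) (h p.1)).indicator (fun _ => g' p.1) p.2 with hF
  have hS : MeasurableSet {p : ℝ × ℝ | 0 < p.2 ∧ p.2 < h p.1} :=
    (measurableSet_lt measurable_const measurable_snd).inter
      (measurableSet_lt measurable_snd (hmeash.comp measurable_fst))
  have hFeq : F = Set.indicator {p : ℝ × ℝ | 0 < p.2 ∧ p.2 < h p.1} (fun p => g' p.1) := by
    funext p
    simp only [hF, Set.indicator_apply, Set.mem_Ioo, Set.mem_setOf_eq]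
  have hFmeas : Measurable F := by
    rw [hFeq]
    exact (hmeas.comp measurable_fst).indicator hS
  have hFint : Integrable F ((volume.restrict (Set.Iic t)).prod volume) := by
    refine (integrable_prod_iff hFmeas.aestronglyMeasurable).2
      ⟨Filter.Eventually.of_forall fun x => ?_, ?_⟩
    · simp only [hF]
      rw [integrable_indicator_iff measurableSet_Ioo]
      refine integrableOn_const (hs := ne_of_lt ?_)
      rw [Real.volume_Ioo]
      exact ENNReal.ofReal_lt_top
    · have heq : (fun x => ∫ s, ‖F (x, s)‖) = fun x => ‖g' x‖ * h x := by
        funext x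
        have : (fun s => ‖F (x, s)‖)
            = fun s => (Set.Ioo (0:ℝ) (h x)).indicator (fun _ => ‖g' x‖) s := by
          funext s
          simp only [hF]
          exact norm_indicator_eq_indicator_norm _ _
        rw [this, hA x ‖g' x‖]
      rw [heq]
      refine (hgh'.norm.congr ?_).restrict
      refine Filter.Eventually.of_forall fun x => ?_
      simp only [norm_mul, Real.norm_eq_abs, abs_of_nonneg (hh0 x)]
  calc ∫ x in Set.Iic t, g' x * h x
      = ∫ x in Set.Iic t, ∫ s, (Set.Ioo (0:ℝ) (h x)).indicator (fun _ => g' x) s := by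
        exact integral_congr_ae (Filter.Eventually.of_forall fun x => (hA x (g' x)).symm)
    _ = ∫ s, ∫ x in Set.Iic t, (Set.Ioo (0:ℝ) (h x)).indicator (fun _ => g' x) s :=
        integral_integral_swap hFint
    _ ≤ 0 := by
        refine integral_nonpos fun s => ?_
        rcases le_or_gt s 0 with hs | hs
        · have : (fun x => (Set.Ioo (0:ℝ) (h x)).indicator (fun _ => g' x) s)
              = fun _ => (0:ℝ) := by
            funext x
            exact Set.indicator_of_notMem (fun hm => absurd hm.1 (not_lt.2 hs)) _
          simp [this]
        · have hrw : (fun x => (Set.Ioo (0:ℝ) (h x)).indicator (fun _ => g' x) s)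
              = fun x => ({x | s < h x}).indicator g' x := by
            funext x
            simp only [Set.indicator_apply, Set.mem_Ioo, Set.mem_setOf_eq]
            by_cases hx : s < h x
            · rw [if_pos ⟨hs, hx⟩, if_pos hx]
            · rw [if_neg (fun hc => hx hc.2), if_neg hx]
          rw [hrw, setIntegral_indicator (measurableSet_lt measurable_const hmeash)]
          exact key_aux g' h hhanti hneg' t s
end

section
/- Let ν be a product probability measure on ℝ^n and let f, g : ℝ^n → [0,1] both be monotone nondecreasing (in the coordinatewise partial order). Then E_ν[f·g] ≥ E_ν[f]·E_ν[g]. The same conclusion holds if both f and g are monotone nonincreasing. -/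
open MeasureTheory

private lemma int01 {α : Type*} [MeasurableSpace α] {μ : Measure α} [IsFiniteMeasure μ]
    {f : α → ℝ} (hf : Measurable f) (h01 : ∀ x, f x ∈ Set.Icc (0 : ℝ) 1) :
    Integrable f μ := by
  refine (integrable_const (1 : ℝ)).mono' hf.aestronglyMeasurable ?_
  filter_upwards with x
  rw [Real.norm_eq_abs, abs_of_nonneg (h01 x).1]
  exact (h01 x).2

private lemma mul01 {a b : ℝ} (ha : a ∈ Set.Icc (0 : ℝ) 1) (hb : b ∈ Set.Icc (0 : ℝ) 1) :
    a * b ∈ Set.Icc (0 : ℝ) 1 :=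
  ⟨mul_nonneg ha.1 hb.1, mul_le_one₀ ha.2 hb.1 hb.2⟩

/-- Harris inequality for "similarly ordered" functions on a probability space. -/
private lemma harris_aux {α : Type*} [MeasurableSpace α] (μ : Measure α)
    [IsProbabilityMeasure μ] (f g : α → ℝ) (hf : Measurable f) (hg : Measurable g)
    (hf01 : ∀ x, f x ∈ Set.Icc (0 : ℝ) 1) (hg01 : ∀ x, g x ∈ Set.Icc (0 : ℝ) 1)
    (hsim : ∀ x y, 0 ≤ (f x - f y) * (g x - g y)) :
    ∫ x, f x * g x ∂μ ≥ (∫ x, f x ∂μ) * ∫ x, g x ∂μ := by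
  have hA : Integrable (fun p : α × α => f p.1 * g p.1) (μ.prod μ) :=
    int01 ((hf.comp measurable_fst).mul (hg.comp measurable_fst))
      (fun p => mul01 (hf01 _) (hg01 _))
  have hB : Integrable (fun p : α × α => f p.2 * g p.2) (μ.prod μ) :=
    int01 ((hf.comp measurable_snd).mul (hg.comp measurable_snd))
      (fun p => mul01 (hf01 _) (hg01 _))
  have hC : Integrable (fun p : α × α => f p.1 * g p.2) (μ.prod μ) :=
    int01 ((hf.comp measurable_fst).mul (hg.comp measurable_snd))
      (fun p => mul01 (hf01 _) (hg01 _))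
  have hD : Integrable (fun p : α × α => f p.2 * g p.1) (μ.prod μ) :=
    int01 ((hf.comp measurable_snd).mul (hg.comp measurable_fst))
      (fun p => mul01 (hf01 _) (hg01 _))
  have key : (0 : ℝ) ≤ ∫ p : α × α, (f p.1 - f p.2) * (g p.1 - g p.2) ∂(μ.prod μ) :=
    integral_nonneg fun p => hsim _ _
  have hfgint : Integrable (fun x => f x * g x) μ :=
    int01 (hf.mul hg) (fun x => mul01 (hf01 x) (hg01 x))
  have hfst : ∫ p : α × α, f p.1 * g p.1 ∂(μ.prod μ) = ∫ x, f x * g x ∂μ := by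
    rw [integral_prod _ hA]
    simp
  have hsnd : ∫ p : α × α, f p.2 * g p.2 ∂(μ.prod μ) = ∫ x, f x * g x ∂μ := by
    rw [integral_prod _ hB]
    simp [integral_const]
  have hcross1 : ∫ p : α × α, f p.1 * g p.2 ∂(μ.prod μ)
      = (∫ x, f x ∂μ) * ∫ x, g x ∂μ := integral_prod_mul f g
  have hcross2 : ∫ p : α × α, f p.2 * g p.1 ∂(μ.prod μ)
      = (∫ x, f x ∂μ) * ∫ x, g x ∂μ := by
    have : (fun p : α × α => f p.2 * g p.1) = fun p : α × α => g p.1 * f p.2 := by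
      funext p; ring
    rw [this, integral_prod_mul g f, mul_comm]
  have expand : ∫ p : α × α, (f p.1 - f p.2) * (g p.1 - g p.2) ∂(μ.prod μ)
      = 2 * (∫ x, f x * g x ∂μ) - 2 * ((∫ x, f x ∂μ) * ∫ x, g x ∂μ) := by
    have hpt : (fun p : α × α => (f p.1 - f p.2) * (g p.1 - g p.2))
        = fun p : α × α => (f p.1 * g p.1 + f p.2 * g p.2)
          - (f p.1 * g p.2 + f p.2 * g p.1) := by
      funext p; ring
    have hAB : Integrable (fun p : α × α => f p.1 * g p.1 + f p.2 * g p.2) (μ.prod μ) :=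
      hA.add hB
    have hCD : Integrable (fun p : α × α => f p.1 * g p.2 + f p.2 * g p.1) (μ.prod μ) :=
      hC.add hD
    rw [hpt, integral_sub hAB hCD, integral_add hA hB, integral_add hC hD,
      hfst, hsnd, hcross1, hcross2]
    ring
  rw [expand] at key
  linarith

private lemma harris_pi (n : ℕ) :
    ∀ (ν : Fin n → Measure ℝ), (∀ i, IsProbabilityMeasure (ν i)) →
    ∀ f g : (Fin n → ℝ) → ℝ, Measurable f → Measurable g →
    (∀ x, f x ∈ Set.Icc (0 : ℝ) 1) → (∀ x, g x ∈ Set.Icc (0 : ℝ) 1) →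
    ((Monotone f ∧ Monotone g) ∨ (Antitone f ∧ Antitone g)) →
    ∫ x, f x * g x ∂Measure.pi ν
      ≥ (∫ x, f x ∂Measure.pi ν) * ∫ x, g x ∂Measure.pi ν := by
  induction n with
  | zero =>
    intro ν hν f g hfm hgm hf01 hg01 _
    haveI := hν
    exact harris_aux _ f g hfm hgm hf01 hg01
      (fun x y => by rw [Subsingleton.elim x y]; simp)
  | succ n IH =>
    intro ν hν f g hfm hgm hf01 hg01 hmono
    haveI := hν
    set e := MeasurableEquiv.piFinSuccAbove (fun _ : Fin (n + 1) => ℝ) 0 with he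
    set π := Measure.pi (fun j : Fin n => ν ((0 : Fin (n + 1)).succAbove j)) with hπ
    haveI : ∀ j : Fin n, IsProbabilityMeasure (ν ((0 : Fin (n + 1)).succAbove j)) :=
      fun j => hν _
    haveI : IsProbabilityMeasure π := by rw [hπ]; infer_instance
    have hmp : MeasurePreserving e (Measure.pi ν) ((ν 0).prod π) :=
      measurePreserving_piFinSuccAbove ν 0
    have hint : ∀ φ : (Fin (n + 1) → ℝ) → ℝ,
        ∫ x, φ x ∂Measure.pi ν = ∫ p, φ (e.symm p) ∂((ν 0).prod π) :=
      fun φ => ((hmp.symm e).integral_comp e.symm.measurableEmbedding φ).symm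
    set f' : ℝ × (Fin n → ℝ) → ℝ := fun p => f (e.symm p) with hf'
    set g' : ℝ × (Fin n → ℝ) → ℝ := fun p => g (e.symm p) with hg'
    have hf'm : Measurable f' := hfm.comp e.symm.measurable
    have hg'm : Measurable g' := hgm.comp e.symm.measurable
    have hf'01 : ∀ p, f' p ∈ Set.Icc (0 : ℝ) 1 := fun p => hf01 _
    have hg'01 : ∀ p, g' p ∈ Set.Icc (0 : ℝ) 1 := fun p => hg01 _
    -- monotonicity of the insertion map
    have hins : ∀ (t s : ℝ) (y y' : Fin n → ℝ), t ≤ s → y ≤ y' →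
        (e.symm (t, y) : Fin (n + 1) → ℝ) ≤ e.symm (s, y') := by
      intro t s y y' hts hyy j
      simp only [he, MeasurableEquiv.piFinSuccAbove_symm_apply]
      induction j using Fin.cases with
      | zero => simpa using hts
      | succ k => simpa using hyy k
    -- sections
    set F : ℝ → ℝ := fun t => ∫ y, f' (t, y) ∂π with hF
    set G : ℝ → ℝ := fun t => ∫ y, g' (t, y) ∂π with hG
    have hsecfm : ∀ t : ℝ, Measurable (fun y => f' (t, y)) :=
      fun t => hf'm.comp (measurable_prodMk_left)
    have hsecgm : ∀ t : ℝ, Measurable (fun y => g' (t, y)) :=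
      fun t => hg'm.comp (measurable_prodMk_left)
    have hFmeas : Measurable F :=
      (hf'm.stronglyMeasurable.integral_prod_right').measurable
    have hGmeas : Measurable G :=
      (hg'm.stronglyMeasurable.integral_prod_right').measurable
    have hF01 : ∀ t, F t ∈ Set.Icc (0 : ℝ) 1 := by
      intro t
      constructor
      · exact integral_nonneg fun y => (hf'01 _).1
      · calc F t ≤ ∫ _, (1 : ℝ) ∂π :=
              integral_mono (int01 (hsecfm t) fun y => hf'01 _) (integrable_const 1)
                (fun y => (hf'01 _).2)
          _ = 1 := by simp
    have hG01 : ∀ t, G t ∈ Set.Icc (0 : ℝ) 1 := by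
      intro t
      constructor
      · exact integral_nonneg fun y => (hg'01 _).1
      · calc G t ≤ ∫ _, (1 : ℝ) ∂π :=
              integral_mono (int01 (hsecgm t) fun y => hg'01 _) (integrable_const 1)
                (fun y => (hg'01 _).2)
          _ = 1 := by simp
    -- monotonicity data
    have hsecmono : ∀ t : ℝ,
        (Monotone (fun y => f' (t, y)) ∧ Monotone (fun y => g' (t, y))) ∨
        (Antitone (fun y => f' (t, y)) ∧ Antitone (fun y => g' (t, y))) := by
      intro t
      rcases hmono with ⟨hf1, hg1⟩ | ⟨hf1, hg1⟩
      · exact Or.inl ⟨fun y y' h => hf1 (hins t t y y' le_rfl h),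
          fun y y' h => hg1 (hins t t y y' le_rfl h)⟩
      · exact Or.inr ⟨fun y y' h => hf1 (hins t t y y' le_rfl h),
          fun y y' h => hg1 (hins t t y y' le_rfl h)⟩
    have hFGsim : ∀ t s : ℝ, 0 ≤ (F t - F s) * (G t - G s) := by
      have hkey : ∀ t s : ℝ, t ≤ s → (F t ≤ F s ∧ G t ≤ G s) ∨ (F s ≤ F t ∧ G s ≤ G t) := by
        intro t s hts
        rcases hmono with ⟨hf1, hg1⟩ | ⟨hf1, hg1⟩
        · left
          constructor
          · exact integral_mono (int01 (hsecfm t) fun y => hf'01 _)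
              (int01 (hsecfm s) fun y => hf'01 _)
              (fun y => hf1 (hins t s y y hts le_rfl))
          · exact integral_mono (int01 (hsecgm t) fun y => hg'01 _)
              (int01 (hsecgm s) fun y => hg'01 _)
              (fun y => hg1 (hins t s y y hts le_rfl))
        · right
          constructor
          · exact integral_mono (int01 (hsecfm s) fun y => hf'01 _)
              (int01 (hsecfm t) fun y => hf'01 _)
              (fun y => hf1 (hins t s y y hts le_rfl))
          · exact integral_mono (int01 (hsecgm s) fun y => hg'01 _)
              (int01 (hsecgm t) fun y => hg'01 _)
              (fun y => hg1 (hins t s y y hts le_rfl))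
      intro t s
      rcases le_total t s with h | h
      · rcases hkey t s h with ⟨h1, h2⟩ | ⟨h1, h2⟩ <;> nlinarith
      · rcases hkey s t h with ⟨h1, h2⟩ | ⟨h1, h2⟩ <;> nlinarith
    -- step 2: inner Harris via IH
    have step2 : ∀ t : ℝ, F t * G t ≤ ∫ y, f' (t, y) * g' (t, y) ∂π := by
      intro t
      exact IH _ (fun j => hν _) _ _ (hsecfm t) (hsecgm t) (fun y => hf'01 _)
        (fun y => hg'01 _) (hsecmono t)
    -- rewrite everything to the product space
    rw [hint (fun x => f x * g x), hint f, hint g]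
    have hfg'int : Integrable (fun p => f' p * g' p) ((ν 0).prod π) :=
      int01 (hf'm.mul hg'm) (fun p => mul01 (hf'01 p) (hg'01 p))
    have hf'int : Integrable f' ((ν 0).prod π) := int01 hf'm hf'01
    have hg'int : Integrable g' ((ν 0).prod π) := int01 hg'm hg'01
    have e1 : ∫ p, f' p * g' p ∂((ν 0).prod π)
        = ∫ t, ∫ y, f' (t, y) * g' (t, y) ∂π ∂(ν 0) := integral_prod _ hfg'int
    have e2 : ∫ p, f' p ∂((ν 0).prod π) = ∫ t, F t ∂(ν 0) := integral_prod _ hf'int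
    have e3 : ∫ p, g' p ∂((ν 0).prod π) = ∫ t, G t ∂(ν 0) := integral_prod _ hg'int
    have hinnerm : Measurable (fun t => ∫ y, f' (t, y) * g' (t, y) ∂π) :=
      ((hf'm.mul hg'm).stronglyMeasurable.integral_prod_right').measurable
    have hinner01 : ∀ t, (∫ y, f' (t, y) * g' (t, y) ∂π) ∈ Set.Icc (0 : ℝ) 1 := by
      intro t
      constructor
      · exact integral_nonneg fun y => (mul01 (hf'01 _) (hg'01 _)).1
      · calc (∫ y, f' (t, y) * g' (t, y) ∂π) ≤ ∫ _, (1 : ℝ) ∂π :=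
              integral_mono (int01 ((hsecfm t).mul (hsecgm t))
                  fun y => mul01 (hf'01 _) (hg'01 _)) (integrable_const 1)
                (fun y => (mul01 (hf'01 _) (hg'01 _)).2)
          _ = 1 := by simp
    have step3 : ∫ t, F t * G t ∂(ν 0) ≤ ∫ t, ∫ y, f' (t, y) * g' (t, y) ∂π ∂(ν 0) :=
      integral_mono (int01 (hFmeas.mul hGmeas) fun t => mul01 (hF01 t) (hG01 t))
        (int01 hinnerm hinner01) step2
    have step4 : ∫ t, F t * G t ∂(ν 0) ≥ (∫ t, F t ∂(ν 0)) * ∫ t, G t ∂(ν 0) :=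
      harris_aux (ν 0) F G hFmeas hGmeas hF01 hG01 hFGsim
    rw [e1, e2, e3]
    exact le_trans step4 step3

/-- FKG/Harris inequality for product measures: if `ν = ν₁ × ⋯ × νₙ` is a product probability
measure on `ℝⁿ` and `f, g : ℝⁿ → [0,1]` are both monotone nondecreasing (or both nonincreasing)
in the coordinatewise order, then `E[f g] ≥ E[f] E[g]`. -/
theorem stmt18 (n : ℕ) (ν : Fin n → Measure ℝ) [∀ i, IsProbabilityMeasure (ν i)]
    (f g : (Fin n → ℝ) → ℝ) (hfm : Measurable f) (hgm : Measurable g)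
    (hf01 : ∀ x, f x ∈ Set.Icc (0 : ℝ) 1) (hg01 : ∀ x, g x ∈ Set.Icc (0 : ℝ) 1)
    (hmono : (Monotone f ∧ Monotone g) ∨ (Antitone f ∧ Antitone g)) :
    ∫ x, f x * g x ∂Measure.pi ν
      ≥ (∫ x, f x ∂Measure.pi ν) * ∫ x, g x ∂Measure.pi ν := by
  exact harris_pi n ν inferInstance f g hfm hgm hf01 hg01 hmono
end
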